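/- Let K be a cone with nonempty interior in a Banach space X and let L: X → X be a positive compact linear operator (L(K) ⊆ K). If v is an interior point of K and λ₀ > 0 satisfy λ₀v - Lv ∈ K, then r(L) ≤ λ₀. -/

import Mathlib

/-- Upper bound for the spectral radius: if the compact positive linear
operator `L` satisfies `L v ≤ λ₀ v` for an interior point `v` of the cone
`K`, then `r(L) ≤ λ₀`, where `r(L) = lim ‖Lⁿ‖^(1/n)`. -/
theorem stmt6 {X : Type*} [NormedAddCommGroup X] [NormedSpace ℝ X]
    [CompleteSpace X]
    (K : Set X) (hKclosed : IsClosed K)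
    (hKadd : ∀ u ∈ K, ∀ v ∈ K, u + v ∈ K)
    (hKsmul : ∀ l : ℝ, 0 ≤ l → ∀ u ∈ K, l • u ∈ K)
    (hKpt : K ∩ (-K) = {0})
    (hKint : (interior K).Nonempty)
    (L : X →L[ℝ] X) (hLK : ∀ u ∈ K, L u ∈ K)
    (hLcpt : IsCompactOperator (⇑L))
    (l₀ : ℝ) (hl₀ : 0 < l₀)
    (v : X) (hv : v ∈ interior K)
    (hvl : l₀ • v - L v ∈ K)
    (r : ℝ)
    (hr : Filter.Tendsto (fun n : ℕ => ‖L ^ n‖ ^ ((n : ℝ)⁻¹))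
      Filter.atTop (nhds r)) :
    r ≤ l₀ := by
  classical
  by_contra hcon
  push_neg at hcon
  set t : ℝ := (l₀ + r) / 2 with ht
  have ht0 : 0 < t := by rw [ht]; linarith
  have htl : l₀ < t := by rw [ht]; linarith
  have htr : t < r := by rw [ht]; linarith
  set M : X →L[ℝ] X := t⁻¹ • L with hM
  have hvK : v ∈ K := interior_subset hv
  have hMapp : ∀ y : X, M y = t⁻¹ • L y := fun y => rfl
  -- M is positive
  have hMK : ∀ u ∈ K, M u ∈ K := by
    intro u hu
    rw [hMapp]
    exact hKsmul _ (by positivity) _ (hLK u hu)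
  -- M v ≤ v
  have hMv : v - M v ∈ K := by
    have h1 : (t - l₀) • v + (l₀ • v - L v) ∈ K :=
      hKadd _ (hKsmul _ (by linarith) _ hvK) _ hvl
    have h2 : t⁻¹ • ((t - l₀) • v + (l₀ • v - L v)) ∈ K :=
      hKsmul _ (by positivity) _ h1
    have he : v - M v = t⁻¹ • ((t - l₀) • v + (l₀ • v - L v)) := by
      rw [hMapp]
      match_scalars <;> field_simp <;> ring
    rwa [he]
  -- powers of M
  have hMpow : ∀ n : ℕ, (M ^ n : X →L[ℝ] X) = (t⁻¹) ^ n • (L ^ n) := by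
    intro n
    induction n with
    | zero => simp
    | succ n ih =>
      rw [pow_succ, pow_succ, ih, hM]
      ext y
      simp [ContinuousLinearMap.mul_apply, smul_smul, mul_comm, pow_succ]
  -- ‖M^n‖ is unbounded
  have hMn : ¬ ∃ C, ∀ n : ℕ, ‖(M ^ n : X →L[ℝ] X)‖ ≤ C := by
    rintro ⟨C, hC⟩
    set C' : ℝ := max C 1 with hC'
    have hC'1 : (1:ℝ) ≤ C' := le_max_right _ _
    have hC'0 : (0:ℝ) < C' := lt_of_lt_of_le one_pos hC'1
    have hLn : ∀ n : ℕ, ‖L ^ n‖ ≤ C' * t ^ n := by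
      intro n
      have h1 : ‖(M ^ n : X →L[ℝ] X)‖ = (t⁻¹) ^ n * ‖L ^ n‖ := by
        rw [hMpow, norm_smul (((t:ℝ))⁻¹ ^ n) (L ^ n), Real.norm_eq_abs,
          abs_of_pos (by positivity : (0:ℝ) < t⁻¹ ^ n)]
      have h2 := hC n
      rw [h1] at h2
      have h3 : (0:ℝ) < t ^ n := by positivity
      calc ‖L ^ n‖ = t ^ n * ((t⁻¹) ^ n * ‖L ^ n‖) := by
            rw [← mul_assoc, ← mul_pow, mul_inv_cancel₀ (ne_of_gt ht0), one_pow, one_mul]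
        _ ≤ t ^ n * C := by
            exact mul_le_mul_of_nonneg_left h2 (le_of_lt h3)
        _ ≤ C' * t ^ n := by
            rw [mul_comm]
            exact mul_le_mul_of_nonneg_right (le_max_left _ _) (le_of_lt h3)
    -- hence r ≤ t
    have htend : Filter.Tendsto (fun n : ℕ => C' ^ ((n:ℝ)⁻¹) * t)
        Filter.atTop (nhds (1 * t)) := by
      apply Filter.Tendsto.mul_const
      have h1 : Filter.Tendsto (fun n : ℕ => ((n:ℝ))⁻¹) Filter.atTop (nhds 0) :=
        tendsto_inv_atTop_zero.comp tendsto_natCast_atTop_atTop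
      have h2 : Filter.Tendsto (fun n : ℕ => Real.exp (Real.log C' * ((n:ℝ))⁻¹))
          Filter.atTop (nhds (Real.exp (Real.log C' * 0))) :=
        (Real.continuous_exp.continuousAt.tendsto).comp ((h1.const_mul _))
      simp only [mul_zero, Real.exp_zero] at h2
      convert h2 using 2 with n
      rw [Real.rpow_def_of_pos hC'0]
    have hle : r ≤ 1 * t := by
      apply le_of_tendsto_of_tendsto hr htend
      filter_upwards [Filter.eventually_ge_atTop 1] with n hn
      have hn0 : (n:ℝ) ≠ 0 := Nat.cast_ne_zero.mpr (by omega)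
      have h1 : ‖L ^ n‖ ^ ((n:ℝ)⁻¹) ≤ (C' * t ^ n) ^ ((n:ℝ)⁻¹) :=
        Real.rpow_le_rpow (norm_nonneg _) (hLn n) (by positivity)
      have h2 : (C' * t ^ n) ^ ((n:ℝ)⁻¹) = C' ^ ((n:ℝ)⁻¹) * t := by
        rw [Real.mul_rpow (le_of_lt hC'0) (by positivity)]
        congr 1
        rw [← Real.rpow_natCast t n, ← Real.rpow_mul (le_of_lt ht0),
          mul_inv_cancel₀ hn0, Real.rpow_one]
      exact le_trans h1 (le_of_eq h2)
    rw [one_mul] at hle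
    linarith
  -- Banach–Steinhaus: a point with unbounded orbit
  have hexx : ∃ x : X, ∀ C : ℝ, ∃ n : ℕ, C < ‖(M ^ n) x‖ := by
    by_contra h
    push_neg at h
    exact hMn (banach_steinhaus (g := fun n : ℕ => (M ^ n : X →L[ℝ] X)) h)
  obtain ⟨x, hx⟩ := hexx
  have hx0 : x ≠ 0 := by
    rintro rfl
    obtain ⟨n, hn⟩ := hx 0
    simp at hn
  -- interior ball
  obtain ⟨δ, hδ0, hball⟩ := Metric.mem_nhds_iff.mp (mem_interior_iff_mem_nhds.mp hv)
  have hpert : ∀ y : X, ‖y‖ < δ → v + y ∈ K := by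
    intro y hy
    apply hball
    rw [Metric.mem_ball, dist_eq_norm]
    simpa using hy
  -- rescale x
  have hxn : (0:ℝ) < ‖x‖ := norm_pos_iff.mpr hx0
  set c : ℝ := δ / (2 * ‖x‖) with hc
  have hc0 : 0 < c := by positivity
  set x' : X := c • x with hx'
  have hx'n : ‖x'‖ < δ := by
    rw [hx', norm_smul, Real.norm_eq_abs, abs_of_pos hc0, hc]
    have hxne : ‖x‖ ≠ 0 := ne_of_gt hxn
    have he : δ / (2 * ‖x‖) * ‖x‖ = δ / 2 := by
      field_simp
    rw [he]
    linarith
  have hxu : ∀ C : ℝ, ∃ n : ℕ, C < ‖(M ^ n) x'‖ := by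
    intro C
    obtain ⟨n, hn⟩ := hx (C / c)
    refine ⟨n, ?_⟩
    rw [hx', map_smul, norm_smul, Real.norm_eq_abs, abs_of_pos hc0]
    calc C = c * (C / c) := by field_simp
      _ < c * ‖(M ^ n) x‖ := by exact mul_lt_mul_of_pos_left hn hc0
  -- invariance of the order interval
  have key : ∀ n : ℕ, v - (M ^ n) x' ∈ K ∧ v + (M ^ n) x' ∈ K := by
    intro n
    induction n with
    | zero =>
      simp only [pow_zero, ContinuousLinearMap.one_apply]
      constructor
      · have := hpert (-x') (by simpa using hx'n)
        simpa [sub_eq_add_neg] using this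
      · exact hpert x' hx'n
    | succ n ih =>
      obtain ⟨h1, h2⟩ := ih
      have e : ∀ y : X, (M ^ (n+1)) y = M ((M ^ n) y) := by
        intro y
        rw [pow_succ']
        rfl
      constructor
      · have : (v - M v) + M (v - (M ^ n) x') ∈ K :=
          hKadd _ hMv _ (hMK _ h1)
        have he : v - (M ^ (n+1)) x' = (v - M v) + M (v - (M ^ n) x') := by
          rw [map_sub, e]
          abel
        rwa [he]
      · have : (v - M v) + M (v + (M ^ n) x') ∈ K :=
          hKadd _ hMv _ (hMK _ h2)
        have he : v + (M ^ (n+1)) x' = (v - M v) + M (v + (M ^ n) x') := by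
          rw [map_add, e]
          abel
        rwa [he]
  -- record indices
  set s : ℕ → ℝ := fun n => ‖(M ^ n) x'‖ with hsdef
  have hrec : ∀ k : ℕ, ∃ mm : ℕ, 1 ≤ mm ∧ (k : ℝ) < s mm ∧ s (mm - 1) ≤ s mm := by
    intro k
    have hex : ∃ n, max (k:ℝ) (s 0) < s n := hxu _
    set mm := Nat.find hex with hmm
    have hspec : max (k:ℝ) (s 0) < s mm := Nat.find_spec hex
    have hm1 : 1 ≤ mm := by
      by_contra h
      push_neg at h
      interval_cases mm
      · exact absurd hspec (not_lt.2 (le_max_right _ _))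
    have hmin := Nat.find_min hex (show mm - 1 < mm by omega)
    push_neg at hmin
    exact ⟨mm, hm1, lt_of_le_of_lt (le_max_left _ _) hspec,
      le_trans hmin (le_of_lt hspec)⟩
  choose m hm1 hmk hmrec using hrec
  have hs0 : ∀ k, 0 < s (m k) := fun k =>
    lt_of_le_of_lt (Nat.cast_nonneg k) (hmk k)
  set z : ℕ → X := fun k => (s (m k))⁻¹ • (M ^ (m k)) x' with hzdef
  have hznorm : ∀ k, ‖z k‖ = 1 := by
    intro k
    rw [hzdef]
    simp only [norm_smul, Real.norm_eq_abs, abs_inv, abs_of_pos (hs0 k)]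
    exact inv_mul_cancel₀ (ne_of_gt (hs0 k))
  set w : ℕ → X := fun k => (s (m k))⁻¹ • (M ^ (m k - 1)) x' with hwdef
  have hwball : ∀ k, w k ∈ Metric.closedBall (0:X) 1 := by
    intro k
    rw [Metric.mem_closedBall, dist_zero_right, hwdef]
    simp only [norm_smul, Real.norm_eq_abs, abs_inv, abs_of_pos (hs0 k)]
    rw [← div_eq_inv_mul]
    exact (div_le_one (hs0 k)).mpr (hmrec k)
  have hzw : ∀ k, z k = M (w k) := by
    intro k
    have hm1k := hm1 k
    have hpow : (M ^ (m k)) x' = M ((M ^ (m k - 1)) x') := by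
      conv_lhs => rw [show m k = (m k - 1) + 1 from by omega]
      rw [pow_succ']
      rfl
    simp only [hzdef, hwdef, map_smul, hpow]
  -- compactness of M
  have hMcpt : IsCompactOperator (⇑M) := by
    have h1 := hLcpt.smul (t⁻¹ : ℝ)
    have h2 : (⇑M) = (t⁻¹ : ℝ) • (⇑L) := by
      ext y
      simp [hMapp]
    rwa [h2]
  obtain ⟨Kc, hKc, hKcim⟩ :=
    IsCompactOperator.image_closedBall_subset_compact
      (f := (M : X →ₗ[ℝ] X)) hMcpt 1
  have hzKc : ∀ k, z k ∈ Kc := by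
    intro k
    apply hKcim
    exact ⟨w k, hwball k, (hzw k).symm⟩
  obtain ⟨zl, hzlKc, φ, hφ, hconv⟩ := hKc.tendsto_subseq hzKc
  -- norm of limit is 1
  have hzl1 : ‖zl‖ = 1 := by
    have h1 : Filter.Tendsto (fun j => ‖z (φ j)‖) Filter.atTop (nhds ‖zl‖) :=
      hconv.norm
    have h2 : (fun j => ‖z (φ j)‖) = fun _ => (1:ℝ) := funext fun j => hznorm _
    rw [h2] at h1
    exact (tendsto_nhds_unique h1 tendsto_const_nhds)
  -- the scalar coefficients tend to 0
  have hsφ : Filter.Tendsto (fun j => (s (m (φ j)))⁻¹) Filter.atTop (nhds 0) := by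
    apply tendsto_inv_atTop_zero.comp
    exact Filter.tendsto_atTop_mono
      (fun j => le_of_lt (lt_of_le_of_lt (Nat.cast_le.mpr hφ.le_apply) (hmk _)))
      tendsto_natCast_atTop_atTop
  have hsv : Filter.Tendsto (fun j => (s (m (φ j)))⁻¹ • v) Filter.atTop
      (nhds (0:X)) := by
    have := hsφ.smul_const v
    simpa using this
  -- -zl ∈ K
  have hneg : -zl ∈ K := by
    have hmem : ∀ j, (s (m (φ j)))⁻¹ • v - z (φ j) ∈ K := by
      intro j
      have h1 := (key (m (φ j))).1
      have h2 := hKsmul _ (le_of_lt (inv_pos.mpr (hs0 (φ j)))) _ h1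
      rwa [smul_sub] at h2
    have hlim : Filter.Tendsto (fun j => (s (m (φ j)))⁻¹ • v - z (φ j))
        Filter.atTop (nhds (-zl)) := by
      have := hsv.sub hconv
      simpa using this
    exact hKclosed.mem_of_tendsto hlim (Filter.Eventually.of_forall hmem)
  -- zl ∈ K
  have hpos : zl ∈ K := by
    have hmem : ∀ j, (s (m (φ j)))⁻¹ • v + z (φ j) ∈ K := by
      intro j
      have h1 := (key (m (φ j))).2
      have h2 := hKsmul _ (le_of_lt (inv_pos.mpr (hs0 (φ j)))) _ h1
      rwa [smul_add] at h2
    have hlim : Filter.Tendsto (fun j => (s (m (φ j)))⁻¹ • v + z (φ j))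
        Filter.atTop (nhds zl) := by
      have := hsv.add hconv
      simpa using this
    exact hKclosed.mem_of_tendsto hlim (Filter.Eventually.of_forall hmem)
  have : zl ∈ K ∩ (-K) := ⟨hpos, by rwa [Set.mem_neg]⟩
  rw [hKpt] at this
  rw [Set.mem_singleton_iff] at this
  rw [this] at hzl1
  simp at hzl1
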